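/- If f : [a,b] → X is regulated (satisfies the Cauchy condition at every one-sided limit point), then V_ε(f,[a,b]) < ∞ for every ε > 0. -/

import Mathlib

open Filter Set

noncomputable def jordanVar {X : Type*} [PseudoMetricSpace X] (f : ℝ → X) (S : Set ℝ) : ENNReal :=
  ⨆ (n : ℕ) (t : Fin (n+1) → ℝ) (_ : Monotone t) (_ : ∀ i, t i ∈ S),
    ∑ i : Fin n, edist (f (t i.succ)) (f (t i.castSucc))

noncomputable def appVar {X : Type*} [PseudoMetricSpace X] (ε : ℝ) (f : ℝ → X) (S : Set ℝ) : ENNReal :=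
  ⨅ (g : ℝ → X) (_ : jordanVar g S < ⊤) (_ : ∀ t ∈ S, dist (f t) (g t) ≤ ε), jordanVar g S

def RegulatedOn {X : Type*} [PseudoMetricSpace X] (f : ℝ → X) (T : Set ℝ) : Prop :=
  (∀ τ ∈ T, (∀ δ > 0, (T ∩ Set.Ioo (τ - δ) τ).Nonempty) →
    ∀ η > 0, ∃ δ > 0, ∀ s ∈ T ∩ Set.Ioo (τ - δ) τ, ∀ u ∈ T ∩ Set.Ioo (τ - δ) τ,
      dist (f s) (f u) ≤ η) ∧
  (∀ τ ∈ T, (∀ δ > 0, (T ∩ Set.Ioo τ (τ + δ)).Nonempty) →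
    ∀ η > 0, ∃ δ > 0, ∀ s ∈ T ∩ Set.Ioo τ (τ + δ), ∀ u ∈ T ∩ Set.Ioo τ (τ + δ),
      dist (f s) (f u) ≤ η)

lemma telescope_nat (n : ℕ) (v : Fin (n+1) → ℕ) (hv : Monotone v) :
    ∑ i : Fin n, (v i.succ - v i.castSucc) = v (Fin.last n) - v 0 := by
  induction n with
  | zero => simp [Fin.last]
  | succ n ih =>
    rw [Fin.sum_univ_castSucc]
    have h1 : ∑ i : Fin n, (v i.castSucc.succ - v i.castSucc.castSucc)
        = ∑ i : Fin n, ((v ∘ Fin.castSucc) i.succ - (v ∘ Fin.castSucc) i.castSucc) := by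
      apply Finset.sum_congr rfl
      intro i _
      simp [Function.comp, Fin.succ_castSucc, -Fin.castSucc_succ]
    rw [h1, ih (v ∘ Fin.castSucc) (hv.comp (Fin.strictMono_castSucc.monotone))]
    have h2 : v 0 ≤ v ((Fin.last n).castSucc) := hv (Fin.zero_le _)
    have h3 : v ((Fin.last n).castSucc) ≤ v ((Fin.last n).succ) := hv (Fin.castSucc_le_succ _)
    have h4 : (Fin.last n).succ = Fin.last (n+1) := Fin.succ_last n
    rw [← h4]
    simp only [Function.comp, Fin.castSucc_zero]
    omega

lemma jordanVar_comp_le {X : Type*} [PseudoMetricSpace X] (F : ℕ → X) (ι : ℝ → ℕ) (S : Set ℝ)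
    (M : ℕ) (C : ENNReal)
    (hm : ∀ s ∈ S, ∀ u ∈ S, s ≤ u → ι s ≤ ι u)
    (hM : ∀ s ∈ S, ι s ≤ M)
    (hC : ∀ s ∈ S, ∀ u ∈ S, edist (F (ι s)) (F (ι u)) ≤ C) :
    jordanVar (fun t => F (ι t)) S ≤ C * M := by
  rw [jordanVar]
  refine iSup_le fun n => iSup_le fun t => iSup_le fun ht => iSup_le fun htS => ?_
  have hvmono : Monotone (fun i : Fin (n+1) => ι (t i)) :=
    fun i j hij => hm (t i) (htS i) (t j) (htS j) (ht hij)
  calc ∑ i : Fin n, edist (F (ι (t i.succ))) (F (ι (t i.castSucc)))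
      ≤ ∑ i : Fin n, C * ((ι (t i.succ) - ι (t i.castSucc) : ℕ) : ENNReal) := by
        refine Finset.sum_le_sum fun i _ => ?_
        by_cases heq : ι (t i.succ) = ι (t i.castSucc)
        · rw [heq]; simp
        · have h1 : ι (t i.castSucc) ≤ ι (t i.succ) := hvmono (Fin.castSucc_le_succ i)
          have h2 : 1 ≤ ι (t i.succ) - ι (t i.castSucc) := by omega
          calc edist (F (ι (t i.succ))) (F (ι (t i.castSucc)))
              ≤ C := hC _ (htS _) _ (htS _)
            _ = C * 1 := by rw [mul_one]
            _ ≤ C * ((ι (t i.succ) - ι (t i.castSucc) : ℕ) : ENNReal) := by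
                refine mul_le_mul_right ?_ C
                exact_mod_cast Nat.one_le_cast.mpr h2
    _ = C * ((∑ i : Fin n, (ι (t i.succ) - ι (t i.castSucc)) : ℕ) : ENNReal) := by
        rw [Nat.cast_sum, Finset.mul_sum]
    _ = C * ((ι (t (Fin.last n)) - ι (t 0) : ℕ) : ENNReal) := by
        rw [telescope_nat n (fun i => ι (t i)) hvmono]
    _ ≤ C * M := by
        refine mul_le_mul_right ?_ C
        exact_mod_cast le_trans (Nat.sub_le _ _) (hM _ (htS _))

theorem stmt14 {X : Type*} [PseudoMetricSpace X] (a b : ℝ) (hab : a ≤ b)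
    (f : ℝ → X) (hreg : RegulatedOn f (Set.Icc a b)) :
    ∀ ε : ℝ, 0 < ε → appVar ε f (Set.Icc a b) < ⊤ := by
  intro ε hε
  classical
  -- Step 1: local oscillation control
  have key : ∀ τ ∈ Icc a b, ∃ d > 0,
      (∀ s ∈ Icc a b ∩ Ioo (τ - d) τ, ∀ u ∈ Icc a b ∩ Ioo (τ - d) τ, dist (f s) (f u) ≤ ε) ∧
      (∀ s ∈ Icc a b ∩ Ioo τ (τ + d), ∀ u ∈ Icc a b ∩ Ioo τ (τ + d), dist (f s) (f u) ≤ ε) := by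
    intro τ hτ
    obtain ⟨dL, hdL, hL⟩ : ∃ dL > 0, ∀ s ∈ Icc a b ∩ Ioo (τ - dL) τ,
        ∀ u ∈ Icc a b ∩ Ioo (τ - dL) τ, dist (f s) (f u) ≤ ε := by
      by_cases hacc : ∀ δ > 0, (Icc a b ∩ Ioo (τ - δ) τ).Nonempty
      · exact hreg.1 τ hτ hacc ε hε
      · push_neg at hacc
        obtain ⟨δ0, hδ0, hemp⟩ := hacc
        exact ⟨δ0, hδ0, fun s hs => by rw [hemp] at hs; exact absurd hs (Set.notMem_empty s)⟩
    obtain ⟨dR, hdR, hR⟩ : ∃ dR > 0, ∀ s ∈ Icc a b ∩ Ioo τ (τ + dR),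
        ∀ u ∈ Icc a b ∩ Ioo τ (τ + dR), dist (f s) (f u) ≤ ε := by
      by_cases hacc : ∀ δ > 0, (Icc a b ∩ Ioo τ (τ + δ)).Nonempty
      · exact hreg.2 τ hτ hacc ε hε
      · push_neg at hacc
        obtain ⟨δ0, hδ0, hemp⟩ := hacc
        exact ⟨δ0, hδ0, fun s hs => by rw [hemp] at hs; exact absurd hs (Set.notMem_empty s)⟩
    refine ⟨min dL dR, lt_min hdL hdR, ?_, ?_⟩
    · intro s hs u hu
      refine hL s ⟨hs.1, ?_, hs.2.2⟩ u ⟨hu.1, ?_, hu.2.2⟩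
      · have := hs.2.1; have := min_le_left dL dR; linarith
      · have := hu.2.1; have := min_le_left dL dR; linarith
    · intro s hs u hu
      refine hR s ⟨hs.1, hs.2.1, ?_⟩ u ⟨hu.1, hu.2.1, ?_⟩
      · have := hs.2.2; have := min_le_right dL dR; linarith
      · have := hu.2.2; have := min_le_right dL dR; linarith
  choose! d dpos hLos hRos using key
  -- Step 2: Lebesgue number
  have hcov : Icc a b ⊆ ⋃ τ : Icc a b, Ioo ((τ : ℝ) - d τ) ((τ : ℝ) + d τ) := by
    intro x hx
    exact mem_iUnion.2 ⟨⟨x, hx⟩, by constructor <;> simp <;> linarith [dpos x hx]⟩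
  obtain ⟨r, hr, hball⟩ := lebesgue_number_lemma_of_metric isCompact_Icc
    (fun τ : Icc a b => isOpen_Ioo) hcov
  -- Step 3: uniform partition with mesh < r
  set N : ℕ := ⌈(b - a) / r⌉₊ + 1 with hN
  have hN0 : (0:ℝ) < N := by positivity
  set h : ℝ := (b - a) / N with hh
  have hh0 : 0 ≤ h := by
    apply div_nonneg <;> linarith
  have hhr : h < r := by
    rw [hh, div_lt_iff₀ hN0]
    have h1 : (b - a) / r ≤ ⌈(b - a) / r⌉₊ := Nat.le_ceil _
    have h2 : (⌈(b - a) / r⌉₊ : ℝ) < N := by rw [hN]; push_cast; linarith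
    have h3 : ((b - a) / r) * r = b - a := by field_simp
    nlinarith
  set x : ℕ → ℝ := fun j => a + j * h with hx
  have hNh : (N : ℝ) * h = b - a := by
    rw [hh]; field_simp
  have hxN : x N = b := by rw [hx]; simp only; linarith
  have hxmem : ∀ j : ℕ, j ≤ N → x j ∈ Icc a b := by
    intro j hj
    have hj' : (j : ℝ) ≤ N := Nat.cast_le.mpr hj
    constructor
    · have : (0:ℝ) ≤ j * h := by positivity
      simp only [hx]; linarith
    · have : (j:ℝ) * h ≤ N * h := by apply mul_le_mul_of_nonneg_right hj' hh0
      simp only [hx]; linarith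
  have hxmono : Monotone x := by
    intro i j hij
    simp only [hx]
    have : (i:ℝ) ≤ j := Nat.cast_le.mpr hij
    nlinarith
  -- Step 4: choose centers via Lebesgue property
  set T : ℕ → ℝ := fun j => if hj : x j ∈ Icc a b then ((hball (x j) hj).choose : ℝ) else a
    with hT
  have hTmem : ∀ j : ℕ, j ≤ N → T j ∈ Icc a b := by
    intro j hj
    rw [hT]; simp only [dif_pos (hxmem j hj)]
    exact ((hball (x j) (hxmem j hj)).choose).2
  have hTsub : ∀ j : ℕ, j ≤ N →
      Metric.ball (x j) r ⊆ Ioo (T j - d (T j)) (T j + d (T j)) := by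
    intro j hj
    rw [hT]; simp only [dif_pos (hxmem j hj)]
    exact (hball (x j) (hxmem j hj)).choose_spec
  have hIsub : ∀ j : ℕ, j < N →
      Icc (x j) (x (j+1)) ⊆ Ioo (T j - d (T j)) (T j + d (T j)) := by
    intro j hj y hy
    apply hTsub j (le_of_lt hj)
    rw [Metric.mem_ball, Real.dist_eq, abs_lt]
    have h1 : x j ≤ y := hy.1
    have h2 : y ≤ x (j+1) := hy.2
    have h3 : x (j+1) - x j = h := by simp only [hx]; push_cast; ring
    constructor <;> linarith
  -- Step 5: representatives, index function, value function
  set rep2 : ℕ → ℝ := fun j =>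
    if hne : (Ioo (x j) (min (T j) (x (j+1))) ∩ Icc a b).Nonempty then hne.choose else a
    with hrep2
  set rep4 : ℕ → ℝ := fun j =>
    if hne : (Ioo (max (T j) (x j)) (x (j+1)) ∩ Icc a b).Nonempty then hne.choose else a
    with hrep4
  set ι : ℝ → ℕ := fun t => if t < b then
      4 * ⌊(t - a) / h⌋₊ + (if t ≤ x ⌊(t - a) / h⌋₊ then 0
        else if t < T ⌊(t - a) / h⌋₊ then 1
        else if t ≤ T ⌊(t - a) / h⌋₊ then 2 else 3)
    else 4 * N with hι
  set κ : ℕ → ℝ := fun m =>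
    if m % 4 = 0 then x (m / 4)
    else if m % 4 = 1 then rep2 (m / 4)
    else if m % 4 = 2 then T (m / 4)
    else rep4 (m / 4) with hκ
  -- floor facts
  have hfloor : ∀ t : ℝ, a ≤ t → t < b →
      ⌊(t - a) / h⌋₊ < N ∧ x ⌊(t - a) / h⌋₊ ≤ t ∧ t < x (⌊(t - a) / h⌋₊ + 1) := by
    intro t hta htb
    have hab' : a < b := lt_of_le_of_lt hta htb
    have hpos : 0 < h := by rw [hh]; apply div_pos (by linarith) hN0
    have hq0 : 0 ≤ (t - a) / h := div_nonneg (by linarith) (le_of_lt hpos)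
    have hfl : (⌊(t - a) / h⌋₊ : ℝ) ≤ (t - a) / h := Nat.floor_le hq0
    have hfu : (t - a) / h < ⌊(t - a) / h⌋₊ + 1 := Nat.lt_floor_add_one _
    have hflm : (⌊(t - a) / h⌋₊ : ℝ) * h ≤ t - a := by
      calc (⌊(t - a) / h⌋₊ : ℝ) * h ≤ ((t - a) / h) * h := by
            apply mul_le_mul_of_nonneg_right hfl (le_of_lt hpos)
        _ = t - a := by field_simp
    have hfum : t - a < ((⌊(t - a) / h⌋₊ : ℝ) + 1) * h := by
      have : ((t - a) / h) * h = t - a := by field_simp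
      nlinarith
    refine ⟨?_, ?_, ?_⟩
    · rw [Nat.floor_lt hq0, div_lt_iff₀ hpos]
      linarith [hNh]
    · simp only [hx]; linarith
    · simp only [hx]; push_cast; linarith
  -- Step 6: monotonicity and boundedness of the index function
  have hcode3 : ∀ t : ℝ, (if t ≤ x ⌊(t - a) / h⌋₊ then 0
      else if t < T ⌊(t - a) / h⌋₊ then 1
      else if t ≤ T ⌊(t - a) / h⌋₊ then 2 else 3) ≤ 3 := by
    intro t; split_ifs <;> omega
  have hιbound : ∀ s ∈ Icc a b, ι s ≤ 4 * N := by
    intro s hs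
    by_cases hsb : s < b
    · have h1 := (hfloor s hs.1 hsb).1
      have h2 := hcode3 s
      simp only [hι]
      rw [if_pos hsb]
      omega
    · simp only [hι]
      rw [if_neg hsb]
  have hιmono : ∀ s ∈ Icc a b, ∀ u ∈ Icc a b, s ≤ u → ι s ≤ ι u := by
    intro s hs u hu hsu
    by_cases hsb : s < b
    · by_cases hub : u < b
      · have hpos : 0 < h := by
          rw [hh]; apply div_pos (by linarith [hs.1]) hN0
        have hdivle : (s - a) / h ≤ (u - a) / h := by gcongr
        have hjj : ⌊(s - a) / h⌋₊ ≤ ⌊(u - a) / h⌋₊ := Nat.floor_mono hdivle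
        simp only [hι]
        rw [if_pos hsb, if_pos hub]
        rcases lt_or_eq_of_le hjj with hlt | heq
        · have h2 := hcode3 s
          have h3 := hcode3 u
          omega
        · rw [← heq]
          have hx1 : x ⌊(s - a) / h⌋₊ = x ⌊(s - a) / h⌋₊ := rfl
          split_ifs <;> first | omega | (exfalso; linarith)
      · have h1 := (hfloor s hs.1 hsb).1
        have h2 := hcode3 s
        simp only [hι]
        rw [if_pos hsb, if_neg hub]
        omega
    · have hub : ¬ u < b := fun hub => hsb (lt_of_le_of_lt hsu hub)
      simp only [hι]
      rw [if_neg hsb, if_neg hub]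
  -- Step 7: bound on the variation of the step function
  set F : ℕ → X := fun m => f (κ m) with hF
  set C : ENNReal := Finset.univ.sup
    (fun p : Fin (4*N+1) × Fin (4*N+1) => edist (F p.1.1) (F p.2.1)) with hC
  have hCb : ∀ s ∈ Icc a b, ∀ u ∈ Icc a b, edist (F (ι s)) (F (ι u)) ≤ C := by
    intro s hs u hu
    have h1 := hιbound s hs
    have h2 := hιbound u hu
    have := Finset.le_sup (f := fun p : Fin (4*N+1) × Fin (4*N+1) => edist (F p.1.1) (F p.2.1))
      (Finset.mem_univ ((⟨ι s, by omega⟩, ⟨ι u, by omega⟩) : Fin (4*N+1) × Fin (4*N+1)))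
    simpa using this
  have hCtop : C < ⊤ := by
    rw [hC]
    rw [Finset.sup_lt_iff (show (⊥ : ENNReal) < ⊤ from bot_lt_top)]
    intro p _
    exact edist_lt_top _ _
  have hvar : jordanVar (fun t => F (ι t)) (Icc a b) ≤ C * ((4*N : ℕ) : ENNReal) :=
    jordanVar_comp_le F ι (Icc a b) (4*N) C hιmono hιbound hCb
  have hfin : jordanVar (fun t => F (ι t)) (Icc a b) < ⊤ :=
    lt_of_le_of_lt hvar (ENNReal.mul_lt_top hCtop (ENNReal.natCast_lt_top _))
  -- Step 8: κ computations
  have hκ0 : ∀ j : ℕ, κ (4*j) = x j := by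
    intro j
    have e1 : (4*j) % 4 = 0 := by omega
    have e2 : (4*j) / 4 = j := by omega
    simp [hκ, e1, e2]
  have hκ1 : ∀ j : ℕ, κ (4*j+1) = rep2 j := by
    intro j
    have e1 : (4*j+1) % 4 = 1 := by omega
    have e2 : (4*j+1) / 4 = j := by omega
    simp [hκ, e1, e2]
  have hκ2 : ∀ j : ℕ, κ (4*j+2) = T j := by
    intro j
    have e1 : (4*j+2) % 4 = 2 := by omega
    have e2 : (4*j+2) / 4 = j := by omega
    simp [hκ, e1, e2]
  have hκ3 : ∀ j : ℕ, κ (4*j+3) = rep4 j := by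
    intro j
    have e1 : (4*j+3) % 4 = 3 := by omega
    have e2 : (4*j+3) / 4 = j := by omega
    simp [hκ, e1, e2]
  -- Step 9: approximation property
  have happrox : ∀ t ∈ Icc a b, dist (f t) (F (ι t)) ≤ ε := by
    intro t ht
    by_cases htb : t < b
    · obtain ⟨hjN, hxle, hlt⟩ := hfloor t ht.1 htb
      set j := ⌊(t - a) / h⌋₊ with hjdef
      have hjN' : j ≤ N := le_of_lt hjN
      have hsubI := hIsub _ hjN
      have hxjlo : T j - d (T j) < x j :=
        (hsubI ⟨le_refl _, hxmono (Nat.le_succ _)⟩).1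
      have hxjhi : x (j + 1) < T j + d (T j) :=
        (hsubI ⟨hxmono (Nat.le_succ _), le_refl _⟩).2
      have hιt : ι t = 4 * j + (if t ≤ x j then 0
          else if t < T j then 1 else if t ≤ T j then 2 else 3) := by
        simp only [hι]; rw [if_pos htb, ← hjdef]
      by_cases h0 : t ≤ x j
      · have hι4 : ι t = 4 * j := by rw [hιt, if_pos h0]; omega
        have heq : t = x j := le_antisymm h0 hxle
        rw [hι4, hF]
        simp only
        rw [hκ0, heq]
        simp [le_of_lt hε]
      · by_cases h1 : t < T j
        · have hιt' : ι t = 4 * j + 1 := by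
            rw [hιt, if_neg h0, if_pos h1]
          have hmem : t ∈ Ioo (x j)
              (min (T j) (x (j + 1))) ∩ Icc a b :=
            ⟨⟨not_le.1 h0, lt_min h1 hlt⟩, ht⟩
          have hne : (Ioo (x j)
              (min (T j) (x (j + 1))) ∩ Icc a b).Nonempty := ⟨t, hmem⟩
          have hrmem : rep2 j ∈ Ioo (x j)
              (min (T j) (x (j + 1))) ∩ Icc a b := by
            rw [hrep2]; simp only [dif_pos hne]; exact hne.choose_spec
          have hclaim : ∀ y ∈ Ioo (x j)
              (min (T j) (x (j + 1))) ∩ Icc a b,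
              y ∈ Icc a b ∩ Ioo (T j - d (T j)) (T j) := by
            intro y hy
            refine ⟨hy.2, lt_trans hxjlo hy.1.1, lt_of_lt_of_le hy.1.2 (min_le_left _ _)⟩
          have := hLos (T j) (hTmem _ hjN') t (hclaim t hmem)
            (rep2 j) (hclaim _ hrmem)
          rw [hιt', hF]
          simp only
          rw [hκ1]
          exact this
        · by_cases h2 : t ≤ T j
          · have hιt' : ι t = 4 * j + 2 := by
              rw [hιt, if_neg h0, if_neg h1, if_pos h2]
            have heq : t = T j := le_antisymm h2 (not_lt.1 h1)
            rw [hιt', hF]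
            simp only
            rw [hκ2, heq]
            simp [le_of_lt hε]
          · have hιt' : ι t = 4 * j + 3 := by
              rw [hιt, if_neg h0, if_neg h1, if_neg h2]
            have hmem : t ∈ Ioo (max (T j) (x j))
                (x (j + 1)) ∩ Icc a b :=
              ⟨⟨max_lt (not_le.1 h2) (not_le.1 h0), hlt⟩, ht⟩
            have hne : (Ioo (max (T j) (x j))
                (x (j + 1)) ∩ Icc a b).Nonempty := ⟨t, hmem⟩
            have hrmem : rep4 j ∈ Ioo (max (T j) (x j))
                (x (j + 1)) ∩ Icc a b := by
              rw [hrep4]; simp only [dif_pos hne]; exact hne.choose_spec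
            have hclaim : ∀ y ∈ Ioo (max (T j) (x j))
                (x (j + 1)) ∩ Icc a b,
                y ∈ Icc a b ∩ Ioo (T j) (T j + d (T j)) := by
              intro y hy
              refine ⟨hy.2, lt_of_le_of_lt (le_max_left _ _) hy.1.1, lt_trans hy.1.2 hxjhi⟩
            have := hRos (T j) (hTmem _ hjN') t (hclaim t hmem)
              (rep4 j) (hclaim _ hrmem)
            rw [hιt', hF]
            simp only
            rw [hκ3]
            exact this
    · have htb' : t = b := le_antisymm ht.2 (not_lt.1 htb)
      have hιt : ι t = 4 * N := by simp only [hι]; rw [if_neg htb]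
      rw [hιt, hF]
      simp only
      rw [hκ0, hxN, htb']
      simp [le_of_lt hε]
  -- Conclusion
  refine lt_of_le_of_lt ?_ hfin
  rw [appVar]
  refine iInf_le_of_le (fun t => F (ι t)) ?_
  refine iInf_le_of_le hfin ?_
  exact iInf_le _ happrox
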